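/- Let μ be a positive Borel measure with compact support in ℂ^d and let σ be a positive Borel measure with compact support contained in 𝒮(μ). Then 𝒩(μ + σ) = 𝒩(μ), k_j^{μ+σ} = k_j^μ for all j ≥ 0, and K_n^{μ+σ}(z,z) ≤ K_n^μ(z,z) for all z ∈ ℂ^d and all n ≥ 0. -/

import Mathlib

open MeasureTheory Matrix Finset

namespace CD

variable {d : ℕ}

/-- The `L²(μ)` inner product of two polynomial functions. -/
noncomputable def inner2 (μ : Measure (Fin d → ℂ)) (f g : MvPolynomial (Fin d) ℂ) : ℂ :=
  ∫ z, MvPolynomial.eval z f * (starRingEnd ℂ) (MvPolynomial.eval z g) ∂μ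

/-- The moment matrix `M̃_k(μ)` for an enumeration `α` of multi-indices. -/
noncomputable def momentMatrix (μ : Measure (Fin d → ℂ)) (α : ℕ → (Fin d →₀ ℕ)) (k : ℕ) :
    Matrix (Fin (k + 1)) (Fin (k + 1)) ℂ :=
  Matrix.of fun j ℓ =>
    inner2 μ (MvPolynomial.monomial (α (ℓ : ℕ)) 1) (MvPolynomial.monomial (α (j : ℕ)) 1)

/-- `k_n^μ = min {k : rank M̃_k(μ) = n+1}`. -/
noncomputable def kdeg (μ : Measure (Fin d → ℂ)) (α : ℕ → (Fin d →₀ ℕ)) (n : ℕ) : ℕ :=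
  sInf {k | (momentMatrix μ α k).rank = n + 1}

/-- `deg p ≤ k` with respect to the enumeration `α`. -/
def DegLE (α : ℕ → (Fin d →₀ ℕ)) (p : MvPolynomial (Fin d) ℂ) (k : ℕ) : Prop :=
  ∀ m : ℕ, MvPolynomial.coeff (α m) p ≠ 0 → m ≤ k

/-- `deg p = k` with respect to the enumeration `α`. -/
def DegEq (α : ℕ → (Fin d →₀ ℕ)) (p : MvPolynomial (Fin d) ℂ) (k : ℕ) : Prop :=
  DegLE α p k ∧ MvPolynomial.coeff (α k) p ≠ 0

/-- An admissible enumeration of all multi-indices: a bijection starting at `0` such that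
multiplication by any variable increases the index. -/
def AdmissibleEnum (α : ℕ → (Fin d →₀ ℕ)) : Prop :=
  Function.Bijective α ∧ α 0 = 0 ∧
    ∀ (j : Fin d) (n : ℕ), ∃ k : ℕ, n < k ∧ α k = α n + Finsupp.single j 1

/-- The Christoffel–Darboux kernel `K_n(z,w) = ∑_{j≤n} p_j(z) conj (p_j(w))`. -/
noncomputable def CDkernel (p : ℕ → MvPolynomial (Fin d) ℂ) (n : ℕ) (z w : Fin d → ℂ) : ℂ :=
  ∑ j ∈ Finset.range (n + 1),
    MvPolynomial.eval z (p j) * (starRingEnd ℂ) (MvPolynomial.eval w (p j))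

/-- `p_0, …, p_n` is the Gram–Schmidt orthonormal family in `L²(μ)`:
orthonormal, with `p_m` a linear combination of the monomials `z^{α(k_0)},…,z^{α(k_m)}`
with positive (real) leading coefficient. -/
def IsONBasisUpTo (μ : Measure (Fin d → ℂ)) (α : ℕ → (Fin d →₀ ℕ))
    (p : ℕ → MvPolynomial (Fin d) ℂ) (n : ℕ) : Prop :=
  (∀ i ≤ n, ∀ j ≤ n, inner2 μ (p i) (p j) = if i = j then 1 else 0) ∧
  (∀ m ≤ n, ∃ c : Fin (m + 1) → ℂ, 0 < (c (Fin.last m)).re ∧ (c (Fin.last m)).im = 0 ∧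
      p m = ∑ i : Fin (m + 1), MvPolynomial.monomial (α (kdeg μ α (i : ℕ))) (c i))

/-- The full Gram–Schmidt orthonormal sequence of `μ`. -/
def IsONBasis (μ : Measure (Fin d → ℂ)) (α : ℕ → (Fin d →₀ ℕ))
    (p : ℕ → MvPolynomial (Fin d) ℂ) : Prop :=
  ∀ n, IsONBasisUpTo μ α p n

/-- The (closed) support of a measure. -/
def msupport {X : Type*} [TopologicalSpace X] [MeasurableSpace X] (μ : Measure X) : Set X :=
  {x | ∀ U : Set X, x ∈ U → IsOpen U → μ U ≠ 0}

/-- `𝒩(μ)`: the ideal of polynomials vanishing on `supp(μ)`. -/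
def Nideal (μ : Measure (Fin d → ℂ)) : Set (MvPolynomial (Fin d) ℂ) :=
  {q | ∀ z ∈ msupport μ, MvPolynomial.eval z q = 0}

/-- `𝒩_n(μ) = {p ∈ 𝒩(μ) : deg p ≤ k_n^μ}`. -/
def NidealLE (μ : Measure (Fin d → ℂ)) (α : ℕ → (Fin d →₀ ℕ)) (n : ℕ) :
    Set (MvPolynomial (Fin d) ℂ) :=
  {q | q ∈ Nideal μ ∧ DegLE α q (kdeg μ α n)}

/-- `𝒮_n(μ)`: the common zero set of `𝒩_n(μ)`. -/
def Svariety (μ : Measure (Fin d → ℂ)) (α : ℕ → (Fin d →₀ ℕ)) (n : ℕ) : Set (Fin d → ℂ) :=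
  {z | ∀ q ∈ NidealLE μ α n, MvPolynomial.eval z q = 0}

/-- `𝒮(μ)`: the Zariski closure of `supp(μ)`, i.e. the common zero set of `𝒩(μ)`. -/
def Szar (μ : Measure (Fin d → ℂ)) : Set (Fin d → ℂ) :=
  {z | ∀ q ∈ Nideal μ, MvPolynomial.eval z q = 0}

/-- `ℒ_n(μ)`: the span of `p_0,…,p_n`. -/
def Lspan (p : ℕ → MvPolynomial (Fin d) ℂ) (n : ℕ) : Set (MvPolynomial (Fin d) ℂ) :=
  {q | ∃ c : Fin (n + 1) → ℂ, q = ∑ j : Fin (n + 1), c j • p (j : ℕ)}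

/-- The `L²(μ)` norm of a polynomial. -/
noncomputable def norm2 (μ : Measure (Fin d → ℂ)) (f : MvPolynomial (Fin d) ℂ) : ℝ :=
  Real.sqrt ((inner2 μ f f).re)

/-- Multivariate cosine function `C_n(z,w)`. -/
noncomputable def coskM (p : ℕ → MvPolynomial (Fin d) ℂ) (n : ℕ) (z w : Fin d → ℂ) : ℂ :=
  CDkernel p n z w /
    ((Real.sqrt ((CDkernel p n z z).re) * Real.sqrt ((CDkernel p n w w).re) : ℝ) : ℂ)



section Aux

open MvPolynomial

lemma not_mem_msupport {X : Type*} [TopologicalSpace X] [MeasurableSpace X]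
    {μ : Measure X} {x : X} :
    x ∉ msupport μ ↔ ∃ U : Set X, x ∈ U ∧ IsOpen U ∧ μ U = 0 := by
  simp only [msupport, Set.mem_setOf_eq]
  push_neg
  rfl

lemma msupport_add (μ σ : Measure (Fin d → ℂ)) :
    msupport (μ + σ) = msupport μ ∪ msupport σ := by
  ext x
  constructor
  · intro h
    by_contra hc
    rw [Set.mem_union] at hc
    push_neg at hc
    obtain ⟨U, hxU, hU, hμU⟩ := not_mem_msupport.mp hc.1
    obtain ⟨V, hxV, hV, hσV⟩ := not_mem_msupport.mp hc.2
    refine h (U ∩ V) ⟨hxU, hxV⟩ (hU.inter hV) ?_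
    have h1 : μ (U ∩ V) = 0 := measure_mono_null Set.inter_subset_left hμU
    have h2 : σ (U ∩ V) = 0 := measure_mono_null Set.inter_subset_right hσV
    simp [Measure.add_apply, h1, h2]
  · rintro (h | h) U hxU hU hUV
    · have h0 : μ U = 0 ∧ σ U = 0 := by
        rwa [Measure.add_apply, add_eq_zero] at hUV
      exact h U hxU hU h0.1
    · have h0 : μ U = 0 ∧ σ U = 0 := by
        rwa [Measure.add_apply, add_eq_zero] at hUV
      exact h U hxU hU h0.2

lemma measure_compl_msupport (μ : Measure (Fin d → ℂ)) : μ (msupport μ)ᶜ = 0 := by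
  refine measure_null_of_locally_null _ fun x hx => ?_
  obtain ⟨U, hxU, hU, hU0⟩ := not_mem_msupport.mp hx
  exact ⟨U, mem_nhdsWithin_of_mem_nhds (hU.mem_nhds hxU), hU0⟩

lemma ae_mem_msupport (μ : Measure (Fin d → ℂ)) : ∀ᵐ z ∂μ, z ∈ msupport μ := by
  rw [MeasureTheory.ae_iff]
  exact measure_compl_msupport μ

lemma cd_integrable_of_compact {E : Type*} [NormedAddCommGroup E]
    {g : (Fin d → ℂ) → E} (hg : Continuous g)
    (μ : Measure (Fin d → ℂ)) [IsFiniteMeasure μ] (hc : IsCompact (msupport μ)) :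
    Integrable g μ := by
  obtain ⟨C, hC⟩ := hc.exists_bound_of_continuousOn hg.continuousOn
  refine ⟨hg.aestronglyMeasurable, HasFiniteIntegral.of_bounded (C := C) ?_⟩
  filter_upwards [ae_mem_msupport μ] with z hz using hC z hz

lemma cd_integrable_prod (μ : Measure (Fin d → ℂ)) [IsFiniteMeasure μ]
    (hc : IsCompact (msupport μ)) (f g : MvPolynomial (Fin d) ℂ) :
    Integrable (fun z => eval z f * (starRingEnd ℂ) (eval z g)) μ :=
  cd_integrable_of_compact (f.continuous_eval.mul (continuous_star.comp g.continuous_eval)) μ hc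

end Aux
section Aux2

open MvPolynomial

lemma inner2_sum_left (μ : Measure (Fin d → ℂ)) {ι : Type*} (s : Finset ι)
    (a : ι → ℂ) (u : ι → MvPolynomial (Fin d) ℂ) (g : MvPolynomial (Fin d) ℂ)
    (hint : ∀ i ∈ s, Integrable (fun z => eval z (u i) * (starRingEnd ℂ) (eval z g)) μ) :
    inner2 μ (∑ i ∈ s, a i • u i) g = ∑ i ∈ s, a i * inner2 μ (u i) g := by
  unfold inner2
  have h1 : (fun z => eval z (∑ i ∈ s, a i • u i) * (starRingEnd ℂ) (eval z g))
      = fun z => ∑ i ∈ s, a i * (eval z (u i) * (starRingEnd ℂ) (eval z g)) := by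
    funext z
    rw [map_sum, Finset.sum_mul]
    refine Finset.sum_congr rfl fun i _ => ?_
    simp only [MvPolynomial.smul_eq_C_mul, _root_.map_mul, eval_C]
    ring
  rw [h1, integral_finset_sum _ (fun i hi => (hint i hi).const_mul (a i))]
  exact Finset.sum_congr rfl fun i hi => integral_const_mul _ _

lemma inner2_sum_right (μ : Measure (Fin d → ℂ)) {κ : Type*} (t : Finset κ)
    (b : κ → ℂ) (v : κ → MvPolynomial (Fin d) ℂ) (f : MvPolynomial (Fin d) ℂ)
    (hint : ∀ j ∈ t, Integrable (fun z => eval z f * (starRingEnd ℂ) (eval z (v j))) μ) :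
    inner2 μ f (∑ j ∈ t, b j • v j)
      = ∑ j ∈ t, (starRingEnd ℂ) (b j) * inner2 μ f (v j) := by
  unfold inner2
  have h1 : (fun z => eval z f * (starRingEnd ℂ) (eval z (∑ j ∈ t, b j • v j)))
      = fun z => ∑ j ∈ t, (starRingEnd ℂ) (b j) *
          (eval z f * (starRingEnd ℂ) (eval z (v j))) := by
    funext z
    rw [map_sum, map_sum, Finset.mul_sum]
    refine Finset.sum_congr rfl fun j _ => ?_
    simp only [MvPolynomial.smul_eq_C_mul, _root_.map_mul, eval_C]
    ring
  rw [h1, integral_finset_sum _ (fun j hj => (hint j hj).const_mul _)]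
  exact Finset.sum_congr rfl fun j hj => integral_const_mul _ _

lemma inner2_sum_sum (μ : Measure (Fin d → ℂ)) {ι κ : Type*} (s : Finset ι) (t : Finset κ)
    (a : ι → ℂ) (b : κ → ℂ) (u : ι → MvPolynomial (Fin d) ℂ)
    (v : κ → MvPolynomial (Fin d) ℂ)
    (hint : ∀ i j, Integrable (fun z => eval z (u i) * (starRingEnd ℂ) (eval z (v j))) μ) :
    inner2 μ (∑ i ∈ s, a i • u i) (∑ j ∈ t, b j • v j)
      = ∑ i ∈ s, ∑ j ∈ t, (a i * (starRingEnd ℂ) (b j)) * inner2 μ (u i) (v j) := by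
  have hgi : ∀ i ∈ s, Integrable
      (fun z => eval z (u i) * (starRingEnd ℂ) (eval z (∑ j ∈ t, b j • v j))) μ := by
    intro i _
    have h1 : (fun z => eval z (u i) * (starRingEnd ℂ) (eval z (∑ j ∈ t, b j • v j)))
        = fun z => ∑ j ∈ t, (starRingEnd ℂ) (b j) *
            (eval z (u i) * (starRingEnd ℂ) (eval z (v j))) := by
      funext z
      rw [map_sum, map_sum, Finset.mul_sum]
      refine Finset.sum_congr rfl fun j _ => ?_
      simp only [MvPolynomial.smul_eq_C_mul, _root_.map_mul, eval_C]
      ring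
    rw [h1]
    exact integrable_finset_sum _ (fun j _ => (hint i j).const_mul _)
  rw [inner2_sum_left μ s a u _ hgi]
  refine Finset.sum_congr rfl fun i _ => ?_
  rw [inner2_sum_right μ t b v (u i) (fun j _ => hint i j), Finset.mul_sum]
  exact Finset.sum_congr rfl fun j _ => by ring

lemma inner2_add_measure (μ σ : Measure (Fin d → ℂ)) [IsFiniteMeasure μ] [IsFiniteMeasure σ]
    (hcμ : IsCompact (msupport μ)) (hcσ : IsCompact (msupport σ))
    (f g : MvPolynomial (Fin d) ℂ) :
    inner2 (μ + σ) f g = inner2 μ f g + inner2 σ f g :=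
  integral_add_measure (cd_integrable_prod μ hcμ f g) (cd_integrable_prod σ hcσ f g)

lemma inner2_self_eq (μ : Measure (Fin d → ℂ)) (f : MvPolynomial (Fin d) ℂ) :
    inner2 μ f f = ((∫ z, Complex.normSq (eval z f) ∂μ : ℝ) : ℂ) := by
  unfold inner2
  have h1 : (fun z => eval z f * (starRingEnd ℂ) (eval z f))
      = fun z => ((Complex.normSq (eval z f) : ℝ) : ℂ) := by
    funext z
    rw [Complex.mul_conj]
  rw [h1]
  exact integral_ofReal

lemma inner2_self_re_nonneg (μ : Measure (Fin d → ℂ)) (f : MvPolynomial (Fin d) ℂ) :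
    0 ≤ (inner2 μ f f).re := by
  rw [inner2_self_eq, Complex.ofReal_re]
  exact integral_nonneg fun z => Complex.normSq_nonneg _

lemma eval_eq_zero_on_msupport (μ : Measure (Fin d → ℂ)) [IsFiniteMeasure μ]
    (hc : IsCompact (msupport μ)) (f : MvPolynomial (Fin d) ℂ)
    (h : inner2 μ f f = 0) : ∀ z ∈ msupport μ, eval z f = 0 := by
  have h2 : ∫ z, Complex.normSq (eval z f) ∂μ = 0 := by
    have := inner2_self_eq μ f
    rw [h] at this
    exact_mod_cast this.symm
  have hint : Integrable (fun z => Complex.normSq (eval z f)) μ :=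
    cd_integrable_of_compact (Complex.continuous_normSq.comp f.continuous_eval) μ hc
  have h3 : (fun z => Complex.normSq (eval z f)) =ᵐ[μ] 0 :=
    (integral_eq_zero_iff_of_nonneg (fun z => Complex.normSq_nonneg _) hint).mp h2
  have h3' : ∀ᵐ z ∂μ, Complex.normSq (eval z f) = 0 := by
    filter_upwards [h3] with z hz using hz
  have h4 : μ {z | ¬ Complex.normSq (eval z f) = 0} = 0 := ae_iff.mp h3'
  intro z hz
  by_contra hne
  refine hz {w | eval w f ≠ 0} hne (isOpen_ne.preimage f.continuous_eval) ?_
  have : {w | eval w f ≠ 0} = {w | ¬ Complex.normSq (eval w f) = 0} := by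
    ext w; simp [Complex.normSq_eq_zero]
  rw [this]
  exact h4

lemma inner2_eq_zero_left (μ : Measure (Fin d → ℂ)) {f : MvPolynomial (Fin d) ℂ}
    (h : ∀ z ∈ msupport μ, eval z f = 0) (g : MvPolynomial (Fin d) ℂ) :
    inner2 μ f g = 0 := by
  refine integral_eq_zero_of_ae ?_
  filter_upwards [ae_mem_msupport μ] with z hz
  simp [h z hz]

end Aux2
section Aux3

open MvPolynomial

lemma momentMatrix_mulVec (μ : Measure (Fin d → ℂ)) [IsFiniteMeasure μ]
    (hc : IsCompact (msupport μ)) (α : ℕ → (Fin d →₀ ℕ)) (k : ℕ)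
    (c : Fin (k + 1) → ℂ) (j : Fin (k + 1)) :
    (momentMatrix μ α k).mulVec c j =
      inner2 μ (∑ ℓ : Fin (k + 1), c ℓ • (monomial (α (ℓ : ℕ)) (1 : ℂ)))
        (monomial (α (j : ℕ)) 1) := by
  rw [inner2_sum_left μ Finset.univ c _ _
    (fun i _ => cd_integrable_prod μ hc _ _)]
  simp only [Matrix.mulVec, momentMatrix, dotProduct, Matrix.of_apply]
  exact Finset.sum_congr rfl fun ℓ _ => mul_comm _ _

lemma momentMatrix_mulVec_eq_zero_iff (μ : Measure (Fin d → ℂ)) [IsFiniteMeasure μ]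
    (hc : IsCompact (msupport μ)) (α : ℕ → (Fin d →₀ ℕ)) (k : ℕ) (c : Fin (k + 1) → ℂ) :
    (momentMatrix μ α k).mulVec c = 0 ↔
      ∀ z ∈ msupport μ,
        eval z (∑ ℓ : Fin (k + 1), c ℓ • (monomial (α (ℓ : ℕ)) (1 : ℂ))) = 0 := by
  set f : MvPolynomial (Fin d) ℂ := ∑ ℓ : Fin (k + 1), c ℓ • (monomial (α (ℓ : ℕ)) (1 : ℂ))
    with hf
  constructor
  · intro h
    have hff : inner2 μ f f = 0 := by
      have h1 : inner2 μ f f = ∑ j : Fin (k + 1), (starRingEnd ℂ) (c j) *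
          inner2 μ f (monomial (α (j : ℕ)) 1) := by
        conv_lhs => rw [hf]
        conv_lhs => rw [show (∑ ℓ : Fin (k + 1), c ℓ • (monomial (α (ℓ : ℕ)) (1 : ℂ))) = f
          from hf.symm]
        rw [inner2_sum_right μ Finset.univ c _ f (fun j _ => cd_integrable_prod μ hc _ _)]
      rw [h1]
      refine Finset.sum_eq_zero fun j _ => ?_
      have := congrFun h j
      rw [momentMatrix_mulVec μ hc α k c j] at this
      simp only [Pi.zero_apply] at this
      rw [← hf] at this
      rw [this, mul_zero]
    exact eval_eq_zero_on_msupport μ hc f hff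
  · intro h
    funext j
    rw [momentMatrix_mulVec μ hc α k c j, ← hf]
    simpa using inner2_eq_zero_left μ h _

lemma momentMatrix_rank_add (μ σ : Measure (Fin d → ℂ)) [IsFiniteMeasure μ]
    [IsFiniteMeasure σ] (hcμ : IsCompact (msupport μ)) (hcσ : IsCompact (msupport σ))
    (hσS : msupport σ ⊆ Szar μ) (α : ℕ → (Fin d →₀ ℕ)) (k : ℕ) :
    (momentMatrix (μ + σ) α k).rank = (momentMatrix μ α k).rank := by
  have hcμσ : IsCompact (msupport (μ + σ)) := by
    rw [msupport_add]; exact hcμ.union hcσ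
  have hker : LinearMap.ker (momentMatrix (μ + σ) α k).mulVecLin
      = LinearMap.ker (momentMatrix μ α k).mulVecLin := by
    ext c
    simp only [LinearMap.mem_ker, Matrix.mulVecLin_apply]
    rw [momentMatrix_mulVec_eq_zero_iff (μ + σ) hcμσ α k c,
      momentMatrix_mulVec_eq_zero_iff μ hcμ α k c]
    constructor
    · intro h z hz
      exact h z (by rw [msupport_add]; exact Or.inl hz)
    · intro h z hz
      rw [msupport_add] at hz
      rcases hz with hz | hz
      · exact h z hz
      · exact hσS hz _ h
  have h1 := (momentMatrix (μ + σ) α k).mulVecLin.finrank_range_add_finrank_ker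
  have h2 := (momentMatrix μ α k).mulVecLin.finrank_range_add_finrank_ker
  rw [hker] at h1
  unfold Matrix.rank
  omega

end Aux3
/-- Adding a positive measure supported in the Zariski closure of `supp(μ)` does
not change the null ideal nor the degree sequence, and can only decrease the
Christoffel–Darboux kernel. -/
theorem statement17 (μ σ : Measure (Fin d → ℂ)) [IsFiniteMeasure μ] [IsFiniteMeasure σ]
    (hμ0 : μ ≠ 0) (hμc : IsCompact (msupport μ)) (hσc : IsCompact (msupport σ))
    (hσS : msupport σ ⊆ Szar μ)
    (α : ℕ → (Fin d →₀ ℕ)) (hα : AdmissibleEnum α) :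
    Nideal (μ + σ) = Nideal μ ∧
    (∀ j : ℕ, kdeg (μ + σ) α j = kdeg μ α j) ∧
    ∀ n : ℕ, ∀ p q : ℕ → MvPolynomial (Fin d) ℂ,
      IsONBasisUpTo μ α p n → IsONBasisUpTo (μ + σ) α q n →
      ∀ z : Fin d → ℂ, (CDkernel q n z z).re ≤ (CDkernel p n z z).re := by
  have hNid : Nideal (μ + σ) = Nideal μ := by
    ext f
    simp only [Nideal, Set.mem_setOf_eq, msupport_add]
    constructor
    · intro h z hz
      exact h z (Or.inl hz)
    · rintro h z (hz | hz)
      · exact h z hz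
      · exact hσS hz _ h
  have hkdeg : ∀ j : ℕ, kdeg (μ + σ) α j = kdeg μ α j := by
    intro j
    unfold kdeg
    congr 1
    ext k
    simp only [Set.mem_setOf_eq, momentMatrix_rank_add μ σ hμc hσc hσS α k]
  refine ⟨hNid, hkdeg, ?_⟩
  intro n p q hp hq z
  -- the span of `p 0, …, p n`
  have hmon : ∀ m, m ≤ n → (MvPolynomial.monomial (α (kdeg μ α m)) (1 : ℂ)) ∈
      Submodule.span ℂ (Set.range fun i : Fin (n + 1) => p (i : ℕ)) := by
    intro m
    induction m using Nat.strong_induction_on with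
    | _ m ih =>
      intro hm
      obtain ⟨c, hre, _, hpm⟩ := hp.2 m hm
      have hlast : c (Fin.last m) ≠ 0 := by
        intro h
        rw [h] at hre
        simp at hre
      have hrep : (MvPolynomial.monomial (α (kdeg μ α m)) (c (Fin.last m)))
          = p m - ∑ i : Fin m,
              MvPolynomial.monomial (α (kdeg μ α (i : ℕ))) (c i.castSucc) := by
        rw [hpm, Fin.sum_univ_castSucc]
        simp only [Fin.coe_castSucc, Fin.val_last]
        ring
      have hmem : (MvPolynomial.monomial (α (kdeg μ α m)) (c (Fin.last m))) ∈
          Submodule.span ℂ (Set.range fun i : Fin (n + 1) => p (i : ℕ)) := by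
        rw [hrep]
        refine Submodule.sub_mem _
          (Submodule.subset_span ⟨⟨m, Nat.lt_succ_of_le hm⟩, rfl⟩)
          (Submodule.sum_mem _ fun i _ => ?_)
        have h1 := ih (i : ℕ) i.isLt (le_trans (Nat.le_of_lt i.isLt) hm)
        have h2 := Submodule.smul_mem
          (Submodule.span ℂ (Set.range fun i : Fin (n + 1) => p (i : ℕ)))
          (c i.castSucc) h1
        rwa [MvPolynomial.smul_monomial, smul_eq_mul, mul_one] at h2
      have h3 := Submodule.smul_mem
        (Submodule.span ℂ (Set.range fun i : Fin (n + 1) => p (i : ℕ)))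
        (c (Fin.last m))⁻¹ hmem
      rwa [MvPolynomial.smul_monomial, smul_eq_mul, inv_mul_cancel₀ hlast] at h3
  have hqmem : ∀ j : Fin (n + 1), q (j : ℕ) ∈
      Submodule.span ℂ (Set.range fun i : Fin (n + 1) => p (i : ℕ)) := by
    intro j
    have hj : (j : ℕ) ≤ n := Nat.lt_succ_iff.mp j.isLt
    obtain ⟨c, _, _, hqm⟩ := hq.2 (j : ℕ) hj
    simp only [hkdeg] at hqm
    rw [hqm]
    refine Submodule.sum_mem _ fun i _ => ?_
    have h1 := hmon (i : ℕ) (le_trans (Nat.lt_succ_iff.mp i.isLt) hj)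
    have h2 := Submodule.smul_mem
      (Submodule.span ℂ (Set.range fun i : Fin (n + 1) => p (i : ℕ))) (c i) h1
    rwa [MvPolynomial.smul_monomial, smul_eq_mul, mul_one] at h2
  -- the extremal polynomial
  obtain ⟨F, hF⟩ : ∃ F : MvPolynomial (Fin d) ℂ,
      F = ∑ j : Fin (n + 1),
        (starRingEnd ℂ) (MvPolynomial.eval z (q (j : ℕ))) • q (j : ℕ) := ⟨_, rfl⟩
  have hFP : F ∈ Submodule.span ℂ (Set.range fun i : Fin (n + 1) => p (i : ℕ)) := by
    rw [hF]
    exact Submodule.sum_mem _ fun j _ => Submodule.smul_mem _ _ (hqmem j)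
  obtain ⟨c, hc⟩ := (Submodule.mem_span_range_iff_exists_fun ℂ).mp hFP
  -- integrability
  have hintμσ : ∀ f g : MvPolynomial (Fin d) ℂ,
      Integrable (fun z => MvPolynomial.eval z f *
        (starRingEnd ℂ) (MvPolynomial.eval z g)) (μ + σ) :=
    fun f g => (cd_integrable_prod μ hμc f g).add_measure (cd_integrable_prod σ hσc f g)
  -- orthonormality, `Fin` version
  have horthq : ∀ i j : Fin (n + 1),
      inner2 (μ + σ) (q (i : ℕ)) (q (j : ℕ)) = if i = j then 1 else 0 := by
    intro i j
    rw [hq.1 (i : ℕ) (Nat.lt_succ_iff.mp i.isLt) (j : ℕ) (Nat.lt_succ_iff.mp j.isLt)]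
    simp [Fin.val_inj]
  have horthp : ∀ i j : Fin (n + 1),
      inner2 μ (p (i : ℕ)) (p (j : ℕ)) = if i = j then 1 else 0 := by
    intro i j
    rw [hp.1 (i : ℕ) (Nat.lt_succ_iff.mp i.isLt) (j : ℕ) (Nat.lt_succ_iff.mp j.isLt)]
    simp [Fin.val_inj]
  -- the three real quantities
  obtain ⟨Kr, hKrdef⟩ : ∃ r : ℝ,
      r = ∑ j : Fin (n + 1), Complex.normSq (MvPolynomial.eval z (q (j : ℕ))) := ⟨_, rfl⟩
  obtain ⟨Kp, hKpdef⟩ : ∃ r : ℝ,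
      r = ∑ i : Fin (n + 1), Complex.normSq (MvPolynomial.eval z (p (i : ℕ))) := ⟨_, rfl⟩
  obtain ⟨Sc, hScdef⟩ : ∃ r : ℝ,
      r = ∑ i : Fin (n + 1), Complex.normSq (c i) := ⟨_, rfl⟩
  have hKr0 : 0 ≤ Kr := by
    rw [hKrdef]; exact Finset.sum_nonneg fun j _ => Complex.normSq_nonneg _
  have hKp0 : 0 ≤ Kp := by
    rw [hKpdef]; exact Finset.sum_nonneg fun j _ => Complex.normSq_nonneg _
  -- ‖F‖²_{μ+σ} = Kr
  have hqq : inner2 (μ + σ) F F = (Kr : ℂ) := by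
    rw [hF, hKrdef]
    refine Eq.trans (inner2_sum_sum (μ + σ) Finset.univ Finset.univ
      (fun j : Fin (n + 1) => (starRingEnd ℂ) (MvPolynomial.eval z (q (j : ℕ))))
      (fun j : Fin (n + 1) => (starRingEnd ℂ) (MvPolynomial.eval z (q (j : ℕ))))
      (fun j : Fin (n + 1) => q (j : ℕ)) (fun j : Fin (n + 1) => q (j : ℕ)) (fun i j => hintμσ _ _)) ?_
    simp only [horthq, mul_ite, mul_one, mul_zero, Finset.sum_ite_eq, Finset.mem_univ,
      if_true, Complex.conj_conj, Complex.ofReal_sum]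
    exact Finset.sum_congr rfl fun j _ => (Complex.normSq_eq_conj_mul_self).symm
  -- ‖F‖²_μ = Sc
  have hpp : inner2 μ F F = (Sc : ℂ) := by
    rw [← hc, hScdef]
    refine Eq.trans (inner2_sum_sum μ Finset.univ Finset.univ c c
      (fun i : Fin (n + 1) => p (i : ℕ)) (fun i : Fin (n + 1) => p (i : ℕ))
      (fun i j => cd_integrable_prod μ hμc _ _)) ?_
    simp only [horthp, mul_ite, mul_one, mul_zero, Finset.sum_ite_eq, Finset.mem_univ,
      if_true, Complex.mul_conj, Complex.ofReal_sum]
  -- Sc ≤ Kr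
  have hcK : Sc ≤ Kr := by
    have hadd := inner2_add_measure μ σ hμc hσc F F
    rw [hqq, hpp] at hadd
    have hσ0 := inner2_self_re_nonneg σ F
    have := congrArg Complex.re hadd
    simp only [Complex.ofReal_re, Complex.add_re] at this
    linarith
  -- evaluation of F at z
  have heval : (Kr : ℂ) = ∑ i : Fin (n + 1), c i * MvPolynomial.eval z (p (i : ℕ)) := by
    have e1 : MvPolynomial.eval z F = (Kr : ℂ) := by
      rw [hF, hKrdef, map_sum, Complex.ofReal_sum]
      refine Finset.sum_congr rfl fun j _ => ?_
      rw [MvPolynomial.smul_eq_C_mul, _root_.map_mul, MvPolynomial.eval_C]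
      exact (Complex.normSq_eq_conj_mul_self).symm
    have e2 : MvPolynomial.eval z F = ∑ i : Fin (n + 1),
        c i * MvPolynomial.eval z (p (i : ℕ)) := by
      rw [← hc, map_sum]
      refine Finset.sum_congr rfl fun i _ => ?_
      rw [MvPolynomial.smul_eq_C_mul, _root_.map_mul, MvPolynomial.eval_C]
    rw [← e1, e2]
  -- Cauchy–Schwarz
  have hsq : Kr ^ 2 ≤ Sc * Kp := by
    have h1 : ‖((Kr : ℂ))‖ ≤ ∑ i : Fin (n + 1),
        ‖c i‖ * ‖MvPolynomial.eval z (p (i : ℕ))‖ := by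
      rw [heval]
      refine le_trans (norm_sum_le _ _) ?_
      exact le_of_eq (Finset.sum_congr rfl fun i _ => norm_mul _ _)
    rw [Complex.norm_of_nonneg hKr0] at h1
    have h2 := Finset.sum_mul_sq_le_sq_mul_sq Finset.univ
      (fun i : Fin (n + 1) => ‖c i‖)
      (fun i : Fin (n + 1) => ‖MvPolynomial.eval z (p (i : ℕ))‖)
    have h3 : Kr ^ 2 ≤ (∑ i : Fin (n + 1), ‖c i‖ ^ 2) *
        (∑ i : Fin (n + 1), ‖MvPolynomial.eval z (p (i : ℕ))‖ ^ 2) :=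
      le_trans (pow_le_pow_left₀ hKr0 h1 2) h2
    simp only [Complex.sq_norm] at h3
    rw [hScdef, hKpdef]
    exact h3
  -- conclusion
  have hfin : Kr ≤ Kp := by
    rcases eq_or_lt_of_le hKr0 with h0 | h0
    · rw [← h0]; exact hKp0
    · have hm : Kr * Kr ≤ Kr * Kp := by nlinarith
      exact le_of_mul_le_mul_left hm h0
  have hCq : (CDkernel q n z z).re = Kr := by
    unfold CDkernel
    rw [← Fin.sum_univ_eq_sum_range (fun j : ℕ => MvPolynomial.eval z (q j) *
      (starRingEnd ℂ) (MvPolynomial.eval z (q j))) (n + 1)]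
    rw [hKrdef, Complex.re_sum]
    refine Finset.sum_congr rfl fun j _ => ?_
    rw [Complex.mul_conj, Complex.ofReal_re]
  have hCp : (CDkernel p n z z).re = Kp := by
    unfold CDkernel
    rw [← Fin.sum_univ_eq_sum_range (fun j : ℕ => MvPolynomial.eval z (p j) *
      (starRingEnd ℂ) (MvPolynomial.eval z (p j))) (n + 1)]
    rw [hKpdef, Complex.re_sum]
    refine Finset.sum_congr rfl fun j _ => ?_
    rw [Complex.mul_conj, Complex.ofReal_re]
  rw [hCq, hCp]
  exact hfin

end CD
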